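/- Let M = ⟨S, A, P, R, γ⟩ be a finite MDP with 1/2 < γ < 1, M̄ = ⟨S̄, A, P̄, R̄, γ⟩ a latent MDP over a finite metric space (S̄, d̄), φ : S → S̄ an encoder, and π̄ a latent policy. Let π_b be a baseline policy, C ∈ (1, 1/γ), and assume π̄∘φ ∈ N^C(π_b); let D = max{π̄(a|φ(s))/π_b(a|s) : s ∈ S, a ∈ supp π_b(·|s)} (so D ≤ C < 1/γ). Assume M and M̄ are episodic with initial state s_I, reset state s_reset, latent initial state s̄_I = φ(s_I), and latent reset state s̄_reset = φ(s_reset). Let ξ be a stationary distribution of π_b with ξ(s_reset) > 0. Assume the latent model has Lipschitz constants K_R̄, K_P̄ under π̄ with K_P̄ < 1/γ, and set K_V = K_R̄/(1 − γ·K_P̄). Then |J(π̄∘φ) − J̄(π̄)| ≤ (1/ξ(s_reset)) · (L_R/γ + K_V·L_P)/(1/D − γ), where 1/ξ(s_reset) equals the average episode length of π_b and L_R, L_P are the reward and transition losses with respect to ξ and π_b. -/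

import Mathlib

open Finset

variable {S A SL : Type*} [Fintype S] [Fintype A] [Fintype SL]

/-- A (stationary, stochastic) policy. -/
def IsPolicy {X : Type*} [Fintype X] (π : X → A → ℝ) : Prop :=
  ∀ x, (∀ a, 0 ≤ π x a) ∧ (∑ a, π x a) = 1

/-- The neighborhood `N^C(π)`. -/
def InNbhd (C : ℝ) (π π' : S → A → ℝ) : Prop :=
  IsPolicy π' ∧ (∀ s a, (0 < π s a ↔ 0 < π' s a)) ∧
    ∀ s a, 0 < π s a → (2 - C ≤ π' s a / π s a ∧ π' s a / π s a ≤ C)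

/-- The Wasserstein distance between two distributions on a finite metric
space (infimum of the expected distance over all couplings). -/
noncomputable def Wass [MetricSpace SL] (μ ν : SL → ℝ) : ℝ :=
  sInf { c : ℝ | ∃ lam : SL × SL → ℝ, (∀ p, 0 ≤ lam p) ∧
    (∀ x, (∑ y, lam (x, y)) = μ x) ∧ (∀ y, (∑ x, lam (x, y)) = ν y) ∧
    c = ∑ p : SL × SL, lam p * dist p.1 p.2 }


lemma wass_nonneg [MetricSpace SL] (μ ν : SL → ℝ) : 0 ≤ Wass μ ν := by
  apply Real.sInf_nonneg
  rintro c ⟨lam, hlam0, -, -, rfl⟩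
  exact Finset.sum_nonneg fun p _ => mul_nonneg (hlam0 p) dist_nonneg

lemma kant [MetricSpace SL] (μ ν : SL → ℝ) (hμ0 : ∀ x, 0 ≤ μ x) (hν0 : ∀ x, 0 ≤ ν x)
    (hμ1 : ∑ x, μ x = 1) (hν1 : ∑ x, ν x = 1)
    (f : SL → ℝ) (L : ℝ) (hL : 0 ≤ L) (hf : ∀ x y, |f x - f y| ≤ L * dist x y) :
    |(∑ x, μ x * f x) - ∑ x, ν x * f x| ≤ L * Wass μ ν := by
  set SS := { c : ℝ | ∃ lam : SL × SL → ℝ, (∀ p, 0 ≤ lam p) ∧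
    (∀ x, (∑ y, lam (x, y)) = μ x) ∧ (∀ y, (∑ x, lam (x, y)) = ν y) ∧
    c = ∑ p : SL × SL, lam p * dist p.1 p.2 } with hSS
  have hWass : Wass μ ν = sInf SS := rfl
  have hne : SS.Nonempty := by
    refine ⟨∑ p : SL × SL, (fun p : SL × SL => μ p.1 * ν p.2) p * dist p.1 p.2,
      fun p : SL × SL => μ p.1 * ν p.2, fun p => mul_nonneg (hμ0 _) (hν0 _), ?_, ?_, rfl⟩
    · intro x
      show (∑ y, μ x * ν y) = μ x
      rw [← Finset.mul_sum, hν1, mul_one]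
    · intro y
      show (∑ x, μ x * ν y) = ν y
      simp_rw [mul_comm (μ _)]
      rw [← Finset.mul_sum, hμ1, mul_one]
  have key : ∀ c ∈ SS, |(∑ x, μ x * f x) - ∑ x, ν x * f x| ≤ L * c := by
    rintro c ⟨lam, hlam0, hm1, hm2, rfl⟩
    have e1 : (∑ x, μ x * f x) = ∑ p : SL × SL, lam p * f p.1 := by
      rw [Fintype.sum_prod_type]
      refine Finset.sum_congr rfl fun x _ => ?_
      rw [← hm1 x, Finset.sum_mul]
    have e2 : (∑ x, ν x * f x) = ∑ p : SL × SL, lam p * f p.2 := by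
      rw [Fintype.sum_prod_type, Finset.sum_comm]
      refine Finset.sum_congr rfl fun y _ => ?_
      rw [← hm2 y, Finset.sum_mul]
    rw [e1, e2, ← Finset.sum_sub_distrib]
    calc |∑ p : SL × SL, (lam p * f p.1 - lam p * f p.2)|
        ≤ ∑ p : SL × SL, |lam p * f p.1 - lam p * f p.2| := Finset.abs_sum_le_sum_abs _ _
      _ ≤ ∑ p : SL × SL, lam p * (L * dist p.1 p.2) := by
          refine Finset.sum_le_sum fun p _ => ?_
          rw [← mul_sub, abs_mul, abs_of_nonneg (hlam0 p)]
          exact mul_le_mul_of_nonneg_left (hf _ _) (hlam0 p)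
      _ = L * ∑ p : SL × SL, lam p * dist p.1 p.2 := by
          rw [Finset.mul_sum]; refine Finset.sum_congr rfl fun p _ => by ring
  rcases eq_or_lt_of_le hL with rfl | hLpos
  · obtain ⟨c, hc⟩ := hne
    have h := key c hc
    rw [zero_mul] at h ⊢
    exact h
  · rw [hWass, mul_comm, ← div_le_iff₀ hLpos]
    refine le_csInf hne fun c hc => ?_
    rw [div_le_iff₀ hLpos, mul_comm]
    exact key c hc

set_option maxHeartbeats 2000000 in
/-- Theorem 2, value-gap/world-model-quality bound: in the
episodic setting, the gap between the return of `π̄∘φ` in the environment and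
the return of `π̄` in the world model is bounded by the local losses measured
under the baseline policy, scaled by the average episode length
`1/ξ(s_reset)` and by `1/(1/D − γ)`. -/
theorem value_bound
    [Nonempty S] [Nonempty A] [Nonempty SL] [MetricSpace SL] [DecidableEq SL]
    (P : S → A → S → ℝ)
    (hP : ∀ s a, (∀ s', 0 ≤ P s a s') ∧ (∑ s', P s a s') = 1)
    (R : S → A → ℝ) (γ : ℝ) (hγ : 1 / 2 < γ ∧ γ < 1)
    (Pbar : SL → A → SL → ℝ)
    (hPbar : ∀ x a, (∀ x', 0 ≤ Pbar x a x') ∧ (∑ x', Pbar x a x') = 1)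
    (Rbar : SL → A → ℝ)
    (φ : S → SL)
    (πbar : SL → A → ℝ) (hπbar : IsPolicy πbar)
    (πb : S → A → ℝ) (hπb : IsPolicy πb)
    (C : ℝ) (hC : 1 < C ∧ C < 1 / γ)
    (hmem : InNbhd C πb (fun s a => πbar (φ s) a))
    (hne : ((Finset.univ : Finset (S × A)).filter (fun p => 0 < πb p.1 p.2)).Nonempty)
    (D : ℝ)
    (hD : D = ((Finset.univ : Finset (S × A)).filter (fun p => 0 < πb p.1 p.2)).sup' hne
      (fun p => πbar (φ p.1) p.2 / πb p.1 p.2))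
    (sI sreset : S)
    (hepisR : ∀ a, R sreset a = 0)
    (hepisP : ∀ a, P sreset a sI = 1)
    (hepisRbar : ∀ a, Rbar (φ sreset) a = 0)
    (hepisPbar : ∀ a, Pbar (φ sreset) a (φ sI) = 1)
    (hφreset : ∀ s, φ s = φ sreset ↔ s = sreset)
    (ξ : S → ℝ) (hξ : (∀ s, 0 ≤ ξ s) ∧ (∑ s, ξ s) = 1)
    (hstat : ∀ s', (∑ s, ∑ a, ξ s * πb s a * P s a s') = ξ s')
    (hξreset : 0 < ξ sreset)
    (KR KP : ℝ) (hKR0 : 0 ≤ KR) (hKP0 : 0 ≤ KP) (hKP : KP < 1 / γ)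
    (hLipR : ∀ x₁ x₂ : SL,
      |(∑ a, πbar x₁ a * Rbar x₁ a) - (∑ a, πbar x₂ a * Rbar x₂ a)| ≤ KR * dist x₁ x₂)
    (hLipP : ∀ x₁ x₂ : SL,
      Wass (fun x' => ∑ a, πbar x₁ a * Pbar x₁ a x')
        (fun x' => ∑ a, πbar x₂ a * Pbar x₂ a x') ≤ KP * dist x₁ x₂)
    (KV : ℝ) (hKV : KV = KR / (1 - γ * KP))
    (V : S → ℝ)
    (hV : ∀ s, V s = ∑ a, πbar (φ s) a * (R s a + γ * ∑ s', P s a s' * V s'))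
    (Vbar : SL → ℝ)
    (hVbar : ∀ x, Vbar x = ∑ a, πbar x a * (Rbar x a + γ * ∑ x', Pbar x a x' * Vbar x'))
    (LR LP : ℝ)
    (hLR : LR = ∑ s, ∑ a, ξ s * πb s a * |R s a - Rbar (φ s) a|)
    (hLP : LP = ∑ s, ∑ a, ξ s * πb s a *
      Wass (fun x => ∑ s', if φ s' = x then P s a s' else 0) (Pbar (φ s) a)) :
    |V sI - Vbar (φ sI)| ≤
      (1 / ξ sreset) * ((LR / γ + KV * LP) / (1 / D - γ)) := by
  classical
  obtain ⟨hγ2, hγ1⟩ := hγ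
  have hγ0 : 0 < γ := lt_trans (by norm_num) hγ2
  -- basic facts about D
  have hD0 : 0 < D := by
    obtain ⟨p, hp⟩ := hne
    have hpb : 0 < πb p.1 p.2 := (Finset.mem_filter.mp hp).2
    have hpbar : 0 < πbar (φ p.1) p.2 := (hmem.2.1 p.1 p.2).mp hpb
    have hle := Finset.le_sup' (fun p : S × A => πbar (φ p.1) p.2 / πb p.1 p.2) hp
    rw [← hD] at hle
    exact lt_of_lt_of_le (div_pos hpbar hpb) hle
  have hDC : D ≤ C := by
    rw [hD]
    exact Finset.sup'_le _ _ fun p hp =>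
      (hmem.2.2 p.1 p.2 (Finset.mem_filter.mp hp).2).2
  have hγD : γ * D < 1 := by
    have hCγ : C * γ < 1 := (lt_div_iff₀ hγ0).mp hC.2
    nlinarith
  have hratio : ∀ s a, πbar (φ s) a ≤ D * πb s a := by
    intro s a
    by_cases h : 0 < πb s a
    · have hmem' : (s, a) ∈ (Finset.univ.filter fun p : S × A => 0 < πb p.1 p.2) :=
        Finset.mem_filter.mpr ⟨Finset.mem_univ _, h⟩
      have hle := Finset.le_sup' (fun p : S × A => πbar (φ p.1) p.2 / πb p.1 p.2) hmem'
      rw [← hD] at hle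
      calc πbar (φ s) a = (πbar (φ s) a / πb s a) * πb s a := by field_simp
        _ ≤ D * πb s a := mul_le_mul_of_nonneg_right hle h.le
    · have h0 : πb s a = 0 := le_antisymm (not_lt.mp h) ((hπb s).1 a)
      have h1 : πbar (φ s) a = 0 := by
        by_contra hc
        exact h ((hmem.2.1 s a).mpr (lt_of_le_of_ne ((hπbar (φ s)).1 a) (Ne.symm hc)))
      rw [h0, h1, mul_zero]
  have hD1 : 1 ≤ D := by
    obtain ⟨p, hp⟩ := hne
    calc (1:ℝ) = ∑ a, πbar (φ p.1) a := ((hπbar (φ p.1)).2).symm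
      _ ≤ ∑ a, D * πb p.1 a := Finset.sum_le_sum fun a _ => hratio p.1 a
      _ = D := by rw [← Finset.mul_sum, (hπb p.1).2, mul_one]
  have h1γD : 0 < 1 - γ * D := by linarith
  -- KV facts
  have hγKP : 0 < 1 - γ * KP := by
    have : KP * γ < 1 := (lt_div_iff₀ hγ0).mp hKP
    nlinarith
  have hKV0 : 0 ≤ KV := by rw [hKV]; exact div_nonneg hKR0 hγKP.le
  -- mixed latent transition is a distribution
  have hπbar0 : ∀ x a, 0 ≤ πbar x a := fun x => (hπbar x).1
  have hPm0 : ∀ x : SL, ∀ x' : SL, 0 ≤ ∑ a, πbar x a * Pbar x a x' :=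
    fun x x' => Finset.sum_nonneg fun a _ => mul_nonneg (hπbar0 x a) ((hPbar x a).1 x')
  have hPm1 : ∀ x : SL, (∑ x', ∑ a, πbar x a * Pbar x a x') = 1 := by
    intro x
    rw [Finset.sum_comm]
    have h : ∀ a, (∑ x', πbar x a * Pbar x a x') = πbar x a := fun a => by
      rw [← Finset.mul_sum, (hPbar x a).2, mul_one]
    rw [Finset.sum_congr rfl fun a _ => h a, (hπbar x).2]
  -- rewriting of Vbar
  have hVbar' : ∀ x, Vbar x = (∑ a, πbar x a * Rbar x a) +
      γ * ∑ x', (∑ a, πbar x a * Pbar x a x') * Vbar x' := by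
    intro x
    rw [hVbar x]
    simp_rw [mul_add, Finset.sum_add_distrib, Finset.mul_sum, Finset.sum_mul]
    congr 1
    rw [Finset.sum_comm]
    refine Finset.sum_congr rfl fun x' _ => ?_
    rw [Finset.mul_sum]
    exact Finset.sum_congr rfl fun a _ => by ring
  -- Vbar is KV-Lipschitz
  have hSLne : (Finset.univ : Finset (SL × SL)).Nonempty := Finset.univ_nonempty
  set Lv : ℝ := Finset.univ.sup' hSLne
    (fun p : SL × SL => |Vbar p.1 - Vbar p.2| / dist p.1 p.2) with hLv
  have hLv0 : 0 ≤ Lv := by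
    obtain ⟨x⟩ := (inferInstance : Nonempty SL)
    have h := Finset.le_sup' (fun p : SL × SL => |Vbar p.1 - Vbar p.2| / dist p.1 p.2)
      (Finset.mem_univ (x, x))
    rw [← hLv] at h
    simpa using h
  have hLvlip : ∀ x y : SL, |Vbar x - Vbar y| ≤ Lv * dist x y := by
    intro x y
    rcases eq_or_ne x y with rfl | hxy
    · simp
    · have hd : 0 < dist x y := dist_pos.mpr hxy
      have h := Finset.le_sup' (fun p : SL × SL => |Vbar p.1 - Vbar p.2| / dist p.1 p.2)
        (Finset.mem_univ (x, y))
      rw [← hLv] at h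
      rw [div_le_iff₀ hd] at h
      exact h
  have hLKV : Lv ≤ KV := by
    obtain ⟨p, -, hps⟩ := Finset.exists_mem_eq_sup' hSLne
      (fun p : SL × SL => |Vbar p.1 - Vbar p.2| / dist p.1 p.2)
    rw [← hLv] at hps
    rcases eq_or_ne p.1 p.2 with he | hxy
    · have hz : Lv = 0 := by rw [hps, he]; simp
      rw [hz]; exact hKV0
    · have hd : 0 < dist p.1 p.2 := dist_pos.mpr hxy
      have hb : |Vbar p.1 - Vbar p.2| ≤ KR * dist p.1 p.2 + γ * (Lv * (KP * dist p.1 p.2)) := by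
        have h2 : |(∑ x', (∑ a, πbar p.1 a * Pbar p.1 a x') * Vbar x') -
            ∑ x', (∑ a, πbar p.2 a * Pbar p.2 a x') * Vbar x'| ≤
            Lv * Wass (fun x' => ∑ a, πbar p.1 a * Pbar p.1 a x')
              (fun x' => ∑ a, πbar p.2 a * Pbar p.2 a x') :=
          kant _ _ (hPm0 p.1) (hPm0 p.2) (hPm1 p.1) (hPm1 p.2) Vbar Lv hLv0 hLvlip
      
        have h2' : |(∑ x', (∑ a, πbar p.1 a * Pbar p.1 a x') * Vbar x') -
            ∑ x', (∑ a, πbar p.2 a * Pbar p.2 a x') * Vbar x'| ≤ Lv * (KP * dist p.1 p.2) := by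
          exact h2.trans (mul_le_mul_of_nonneg_left (hLipP p.1 p.2) hLv0)
        rw [hVbar' p.1, hVbar' p.2]
        have e : ((∑ a, πbar p.1 a * Rbar p.1 a) +
              γ * ∑ x', (∑ a, πbar p.1 a * Pbar p.1 a x') * Vbar x') -
            ((∑ a, πbar p.2 a * Rbar p.2 a) +
              γ * ∑ x', (∑ a, πbar p.2 a * Pbar p.2 a x') * Vbar x') =
            ((∑ a, πbar p.1 a * Rbar p.1 a) - (∑ a, πbar p.2 a * Rbar p.2 a)) +
            γ * ((∑ x', (∑ a, πbar p.1 a * Pbar p.1 a x') * Vbar x') -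
              ∑ x', (∑ a, πbar p.2 a * Pbar p.2 a x') * Vbar x') := by ring
        rw [e]
        refine (abs_add_le _ _).trans ?_
        rw [abs_mul, abs_of_nonneg hγ0.le]
        exact add_le_add (hLipR p.1 p.2) (mul_le_mul_of_nonneg_left h2' hγ0.le)
      have hLd : Lv * dist p.1 p.2 = |Vbar p.1 - Vbar p.2| := by
        rw [hps]; field_simp
      rw [hKV, le_div_iff₀ hγKP]
      nlinarith [hb, hLd, hd]
  have hVlip : ∀ x y : SL, |Vbar x - Vbar y| ≤ KV * dist x y := fun x y =>
    (hLvlip x y).trans (mul_le_mul_of_nonneg_right hLKV dist_nonneg)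
  -- pushforward distribution
  set push : S → A → SL → ℝ := fun s a x => ∑ s', if φ s' = x then P s a s' else 0 with hpush
  have hpush0 : ∀ s a x, 0 ≤ push s a x := by
    intro s a x
    simp only [hpush]
    refine Finset.sum_nonneg fun s' _ => ?_
    split
    · exact (hP s a).1 s'
    · exact le_refl 0
  have hpush1 : ∀ s a, (∑ x, push s a x) = 1 := by
    intro s a
    simp only [hpush]
    rw [Finset.sum_comm]
    have h : ∀ s', (∑ x, if φ s' = x then P s a s' else 0) = P s a s' := fun s' => by
      simp [Finset.sum_ite_eq]
    rw [Finset.sum_congr rfl fun s' _ => h s', (hP s a).2]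
  have hpushV : ∀ s a, (∑ x, push s a x * Vbar x) = ∑ s', P s a s' * Vbar (φ s') := by
    intro s a
    simp only [hpush]
    simp_rw [Finset.sum_mul, ite_mul, zero_mul]
    rw [Finset.sum_comm]
    refine Finset.sum_congr rfl fun s' _ => ?_
    simp [Finset.sum_ite_eq]
  -- the local gap and its one-step bound
  set g : S → ℝ := fun s => |V s - Vbar (φ s)| with hg
  have hg0 : ∀ s, 0 ≤ g s := fun s => abs_nonneg _
  have hSne : (Finset.univ : Finset S).Nonempty := Finset.univ_nonempty
  set M : ℝ := Finset.univ.sup' hSne g with hM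
  have hgM : ∀ s, g s ≤ M := fun s => Finset.le_sup' g (Finset.mem_univ s)
  have hM0 : 0 ≤ M := (hg0 _).trans (hgM (Classical.arbitrary S))
  set Δ : S → A → ℝ := fun s a =>
    |R s a - Rbar (φ s) a| + γ * (KV * Wass (push s a) (Pbar (φ s) a)) with hΔ
  have hΔ0 : ∀ s a, 0 ≤ Δ s a := by
    intro s a
    simp only [hΔ]
    exact add_nonneg (abs_nonneg _)
      (mul_nonneg hγ0.le (mul_nonneg hKV0 (wass_nonneg _ _)))
  have hstep : ∀ s, g s ≤ (∑ a, πbar (φ s) a * Δ s a) +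
      γ * ∑ a, πbar (φ s) a * ∑ s', P s a s' * g s' := by
    intro s
    have hdecomp : V s - Vbar (φ s) = ∑ a, πbar (φ s) a *
        ((R s a - Rbar (φ s) a) + γ * (∑ s', P s a s' * (V s' - Vbar (φ s'))) +
          γ * ((∑ x, push s a x * Vbar x) - ∑ x, Pbar (φ s) a x * Vbar x)) := by
      rw [hV s, hVbar (φ s), ← Finset.sum_sub_distrib]
      refine Finset.sum_congr rfl fun a _ => ?_
      rw [hpushV s a]
      have e1 : (∑ s', P s a s' * (V s' - Vbar (φ s'))) =
          (∑ s', P s a s' * V s') - ∑ s', P s a s' * Vbar (φ s') := by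
        rw [← Finset.sum_sub_distrib]
        exact Finset.sum_congr rfl fun s' _ => by ring
      rw [e1]; ring
    have habs : ∀ a, |(R s a - Rbar (φ s) a) +
        γ * (∑ s', P s a s' * (V s' - Vbar (φ s'))) +
        γ * ((∑ x, push s a x * Vbar x) - ∑ x, Pbar (φ s) a x * Vbar x)| ≤
        Δ s a + γ * ∑ s', P s a s' * g s' := by
      intro a
      have t1 : |∑ s', P s a s' * (V s' - Vbar (φ s'))| ≤ ∑ s', P s a s' * g s' := by
        refine (Finset.abs_sum_le_sum_abs _ _).trans
          (le_of_eq (Finset.sum_congr rfl fun s' _ => ?_))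
        rw [abs_mul, abs_of_nonneg ((hP s a).1 s')]
      have t2 : |(∑ x, push s a x * Vbar x) - ∑ x, Pbar (φ s) a x * Vbar x| ≤
          KV * Wass (push s a) (Pbar (φ s) a) :=
        kant _ _ (hpush0 s a) ((hPbar (φ s) a).1) (hpush1 s a) ((hPbar (φ s) a).2)
          Vbar KV hKV0 hVlip
      calc |(R s a - Rbar (φ s) a) +
            γ * (∑ s', P s a s' * (V s' - Vbar (φ s'))) +
            γ * ((∑ x, push s a x * Vbar x) - ∑ x, Pbar (φ s) a x * Vbar x)|
          ≤ |R s a - Rbar (φ s) a| + |γ * (∑ s', P s a s' * (V s' - Vbar (φ s')))| +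
            |γ * ((∑ x, push s a x * Vbar x) - ∑ x, Pbar (φ s) a x * Vbar x)| :=
            abs_add_three _ _ _
        _ ≤ |R s a - Rbar (φ s) a| + γ * (∑ s', P s a s' * g s') +
            γ * (KV * Wass (push s a) (Pbar (φ s) a)) := by
            rw [abs_mul, abs_mul, abs_of_nonneg hγ0.le]
            exact add_le_add (add_le_add le_rfl (mul_le_mul_of_nonneg_left t1 hγ0.le))
              (mul_le_mul_of_nonneg_left t2 hγ0.le)
        _ = Δ s a + γ * ∑ s', P s a s' * g s' := by simp only [hΔ]; ring
    calc g s = |∑ a, πbar (φ s) a *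
          ((R s a - Rbar (φ s) a) + γ * (∑ s', P s a s' * (V s' - Vbar (φ s'))) +
            γ * ((∑ x, push s a x * Vbar x) - ∑ x, Pbar (φ s) a x * Vbar x))| := by
          rw [hg]; simp only []; rw [hdecomp]
      _ ≤ ∑ a, πbar (φ s) a * |(R s a - Rbar (φ s) a) +
            γ * (∑ s', P s a s' * (V s' - Vbar (φ s'))) +
            γ * ((∑ x, push s a x * Vbar x) - ∑ x, Pbar (φ s) a x * Vbar x)| := by
          refine (Finset.abs_sum_le_sum_abs _ _).trans
            (le_of_eq (Finset.sum_congr rfl fun a _ => ?_))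
          rw [abs_mul, abs_of_nonneg (hπbar0 (φ s) a)]
      _ ≤ ∑ a, πbar (φ s) a * (Δ s a + γ * ∑ s', P s a s' * g s') :=
          Finset.sum_le_sum fun a _ =>
            mul_le_mul_of_nonneg_left (habs a) (hπbar0 (φ s) a)
      _ = (∑ a, πbar (φ s) a * Δ s a) +
          γ * ∑ a, πbar (φ s) a * ∑ s', P s a s' * g s' := by
          simp_rw [mul_add, Finset.sum_add_distrib, Finset.mul_sum]
          congr 1
          exact Finset.sum_congr rfl fun a _ => Finset.sum_congr rfl fun s' _ => by ring
  -- baseline aggregated quantities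
  set db : S → ℝ := fun s => ∑ a, πb s a * Δ s a with hdb
  set qb : S → S → ℝ := fun s s' => ∑ a, πb s a * P s a s' with hqb
  have hdb0 : ∀ s, 0 ≤ db s := by
    intro s; simp only [hdb]
    exact Finset.sum_nonneg fun a _ => mul_nonneg ((hπb s).1 a) (hΔ0 s a)
  have hqb0 : ∀ s s', 0 ≤ qb s s' := by
    intro s s'; simp only [hqb]
    exact Finset.sum_nonneg fun a _ => mul_nonneg ((hπb s).1 a) ((hP s a).1 s')
  have hstatq : ∀ s', (∑ s, ξ s * qb s s') = ξ s' := by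
    intro s'
    rw [← hstat s']
    simp only [hqb]
    refine Finset.sum_congr rfl fun s _ => ?_
    rw [Finset.mul_sum]
    exact Finset.sum_congr rfl fun a _ => by ring
  -- D-domination of the latent-policy quantities
  have hΔD : ∀ s, (∑ a, πbar (φ s) a * Δ s a) ≤ D * db s := by
    intro s
    calc (∑ a, πbar (φ s) a * Δ s a) ≤ ∑ a, (D * πb s a) * Δ s a :=
        Finset.sum_le_sum fun a _ => mul_le_mul_of_nonneg_right (hratio s a) (hΔ0 s a)
      _ = D * db s := by
        simp only [hdb]; rw [Finset.mul_sum]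
        exact Finset.sum_congr rfl fun a _ => by ring
  -- behaviour at the reset state
  have hPreset : ∀ (a : A) (s' : S), P sreset a s' = if s' = sI then 1 else 0 := by
    intro a s'
    rcases eq_or_ne s' sI with rfl | hs
    · simp [hepisP a]
    · rw [if_neg hs]
      have h1 : (∑ t, P sreset a t) = 1 := (hP sreset a).2
      have h2 : (∑ t ∈ Finset.univ.erase sI, P sreset a t) = 0 := by
        have h3 : (∑ t, P sreset a t) =
            P sreset a sI + ∑ t ∈ Finset.univ.erase sI, P sreset a t :=
          (Finset.add_sum_erase _ _ (Finset.mem_univ sI)).symm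
        rw [h1, hepisP a] at h3
        linarith
      exact (Finset.sum_eq_zero_iff_of_nonneg fun t _ => (hP sreset a).1 t).mp h2 s'
        (Finset.mem_erase.mpr ⟨hs, Finset.mem_univ s'⟩)
  have hqbreset : ∀ s', qb sreset s' = if s' = sI then 1 else 0 := by
    intro s'
    simp only [hqb]
    simp_rw [hPreset]
    rcases eq_or_ne s' sI with rfl | hs
    · simp [(hπb sreset).2]
    · simp [hs]
  -- key: mass at sI is controlled by the stationary distribution
  have hkeymeas : ∀ u : S → ℝ, (∀ s, 0 ≤ u s) → ξ sreset * u sI ≤ ∑ s, ξ s * u s := by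
    intro u hu
    have e1 : u sI = ∑ s', qb sreset s' * u s' := by
      simp_rw [hqbreset, ite_mul, one_mul, zero_mul]
      simp
    have step1 : ξ sreset * u sI ≤ ∑ s, ξ s * ∑ s', qb s s' * u s' := by
      rw [e1]
      exact Finset.single_le_sum (f := fun s => ξ s * ∑ s', qb s s' * u s')
        (fun s _ => mul_nonneg (hξ.1 s)
          (Finset.sum_nonneg fun s' _ => mul_nonneg (hqb0 s s') (hu s')))
        (Finset.mem_univ sreset)
    refine step1.trans (le_of_eq ?_)
    calc (∑ s, ξ s * ∑ s', qb s s' * u s')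
        = ∑ s', (∑ s, ξ s * qb s s') * u s' := by
          simp_rw [Finset.mul_sum, Finset.sum_mul]
          rw [Finset.sum_comm]
          exact Finset.sum_congr rfl fun s _ => Finset.sum_congr rfl fun s' _ => by ring
      _ = ∑ s', ξ s' * u s' := by simp_rw [hstatq]
  -- the average loss under the stationary distribution
  have hLR0 : 0 ≤ LR := by
    rw [hLR]
    exact Finset.sum_nonneg fun s _ => Finset.sum_nonneg fun a _ =>
      mul_nonneg (mul_nonneg (hξ.1 s) ((hπb s).1 a)) (abs_nonneg _)
  have hLP0 : 0 ≤ LP := by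
    rw [hLP]
    exact Finset.sum_nonneg fun s _ => Finset.sum_nonneg fun a _ =>
      mul_nonneg (mul_nonneg (hξ.1 s) ((hπb s).1 a)) (wass_nonneg _ _)
  have hdbξ : (∑ s, ξ s * db s) = LR + γ * (KV * LP) := by
    have e : (∑ s, ξ s * db s) =
        (∑ s, ∑ a, ξ s * πb s a * |R s a - Rbar (φ s) a|) +
        γ * (KV * ∑ s, ∑ a, ξ s * πb s a * Wass (push s a) (Pbar (φ s) a)) := by
      simp only [hdb, hΔ]
      simp_rw [Finset.mul_sum]
      rw [← Finset.sum_add_distrib]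
      refine Finset.sum_congr rfl fun s _ => ?_
      rw [← Finset.sum_add_distrib]
      exact Finset.sum_congr rfl fun a _ => by ring
    rw [e, hLR, hLP]
  -- the iteration
  set K : ℝ := D * (LR + γ * (KV * LP)) / (1 - γ * D) with hK
  have hK0 : 0 ≤ K := by
    rw [hK]
    have : 0 ≤ LR + γ * (KV * LP) :=
      add_nonneg hLR0 (mul_nonneg hγ0.le (mul_nonneg hKV0 hLP0))
    positivity
  obtain ⟨F, hF0, hFsucc⟩ : ∃ F : ℕ → S → ℝ, (∀ s, F 0 s = 0) ∧
      (∀ n s, F (n+1) s = D * db s + γ * D * ∑ s', qb s s' * F n s') :=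
    ⟨fun n => Nat.rec (motive := fun _ => S → ℝ) (fun _ => 0)
      (fun _ Fn s => D * db s + γ * D * ∑ s', qb s s' * Fn s') n,
      fun s => rfl, fun n s => rfl⟩
  have main : ∀ n : ℕ, (∀ s, 0 ≤ F n s) ∧ (∀ s, g s ≤ F n s + (γ*D)^n * M) ∧
      (∑ s, ξ s * F n s ≤ K) := by
    intro n
    induction n with
    | zero =>
      refine ⟨fun s => le_of_eq (hF0 s).symm, fun s => ?_, ?_⟩
      · rw [hF0, pow_zero]
        simpa using hgM s
      · have hz : (∑ s, ξ s * F 0 s) = 0 := by simp [hF0]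
        rw [hz]
        exact hK0
    | succ n ih =>
      obtain ⟨ih0, ihg, ihξ⟩ := ih
      have hγD0 : 0 ≤ (γ*D)^n := by positivity
      refine ⟨?_, ?_, ?_⟩
      · intro s
        rw [hFsucc]
        have : 0 ≤ ∑ s', qb s s' * F n s' :=
          Finset.sum_nonneg fun s' _ => mul_nonneg (hqb0 s s') (ih0 s')
        have h1 : 0 ≤ D * db s := mul_nonneg hD0.le (hdb0 s)
        exact add_nonneg h1 (mul_nonneg (mul_nonneg hγ0.le hD0.le) this)
      · intro s
        have h2 : ∀ a : A, (∑ s', P s a s' * g s') ≤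
            (∑ s', P s a s' * F n s') + (γ*D)^n * M := by
          intro a
          calc (∑ s', P s a s' * g s')
              ≤ ∑ s', P s a s' * (F n s' + (γ*D)^n * M) :=
                Finset.sum_le_sum fun s' _ =>
                  mul_le_mul_of_nonneg_left (ihg s') ((hP s a).1 s')
            _ = (∑ s', P s a s' * F n s') + (∑ s', P s a s') * ((γ*D)^n * M) := by
                simp_rw [mul_add, Finset.sum_add_distrib, ← Finset.sum_mul]
            _ = (∑ s', P s a s' * F n s') + (γ*D)^n * M := by
                rw [(hP s a).2, one_mul]
        have h3 : (∑ a, πbar (φ s) a * ∑ s', P s a s' * F n s') ≤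
            D * ∑ s', qb s s' * F n s' := by
          calc (∑ a, πbar (φ s) a * ∑ s', P s a s' * F n s')
              ≤ ∑ a, (D * πb s a) * ∑ s', P s a s' * F n s' :=
                Finset.sum_le_sum fun a _ => mul_le_mul_of_nonneg_right (hratio s a)
                  (Finset.sum_nonneg fun s' _ => mul_nonneg ((hP s a).1 s') (ih0 s'))
            _ = D * ∑ s', qb s s' * F n s' := by
                simp only [hqb, Finset.mul_sum, Finset.sum_mul]
                rw [Finset.sum_comm]
                exact Finset.sum_congr rfl fun s' _ =>
                  Finset.sum_congr rfl fun a _ => by ring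
        calc g s ≤ (∑ a, πbar (φ s) a * Δ s a) +
              γ * ∑ a, πbar (φ s) a * ∑ s', P s a s' * g s' := hstep s
          _ ≤ D * db s + γ * ∑ a, πbar (φ s) a *
              ((∑ s', P s a s' * F n s') + (γ*D)^n * M) := by
              refine add_le_add (hΔD s) (mul_le_mul_of_nonneg_left
                (Finset.sum_le_sum fun a _ =>
                  mul_le_mul_of_nonneg_left (h2 a) (hπbar0 (φ s) a)) hγ0.le)
          _ = D * db s + γ * ((∑ a, πbar (φ s) a * ∑ s', P s a s' * F n s') +
              (γ*D)^n * M) := by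
              have e3 : (∑ a, πbar (φ s) a *
                  ((∑ s', P s a s' * F n s') + (γ*D)^n * M)) =
                  (∑ a, πbar (φ s) a * ∑ s', P s a s' * F n s') + (γ*D)^n * M := by
                simp_rw [mul_add, Finset.sum_add_distrib, ← Finset.sum_mul,
                  (hπbar (φ s)).2, one_mul]
              rw [e3]
          _ ≤ D * db s + γ * ((D * ∑ s', qb s s' * F n s') + (γ*D)^n * M) :=
              add_le_add_right (mul_le_mul_of_nonneg_left (add_le_add_left h3 _) hγ0.le) _
          _ ≤ F (n+1) s + (γ*D)^(n+1) * M := by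
              rw [hFsucc n s, pow_succ]
              nlinarith [mul_nonneg (mul_nonneg hγD0 hγ0.le)
                (mul_nonneg hM0 (sub_nonneg.mpr hD1))]
      · have e : (∑ s, ξ s * F (n+1) s) =
            D * (∑ s, ξ s * db s) + γ * D * (∑ s', ξ s' * F n s') := by
          simp_rw [hFsucc]
          have e2 : ∀ s : S, ξ s * (D * db s + γ * D * ∑ s', qb s s' * F n s') =
              D * (ξ s * db s) + γ * D * (ξ s * ∑ s', qb s s' * F n s') := fun s => by ring
          rw [Finset.sum_congr rfl fun s _ => e2 s, Finset.sum_add_distrib,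
            ← Finset.mul_sum, ← Finset.mul_sum]
          congr 1
          congr 1
          calc (∑ s, ξ s * ∑ s', qb s s' * F n s')
              = ∑ s', (∑ s, ξ s * qb s s') * F n s' := by
                simp_rw [Finset.mul_sum, Finset.sum_mul]
                rw [Finset.sum_comm]
                exact Finset.sum_congr rfl fun s _ =>
                  Finset.sum_congr rfl fun s' _ => by ring
            _ = ∑ s', ξ s' * F n s' := by simp_rw [hstatq]
        rw [e, hdbξ]
        have h4 : γ * D * (∑ s', ξ s' * F n s') ≤ γ * D * K :=
          mul_le_mul_of_nonneg_left ihξ (by positivity)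
        have h5 : D * (LR + γ * (KV * LP)) + γ * D * K = K := by
          rw [hK]
          rw [eq_div_iff h1γD.ne', add_mul, mul_assoc (γ * D), div_mul_cancel₀ _ h1γD.ne']
          ring
        linarith
  -- take the limit
  have hbound : ∀ n : ℕ, g sI ≤ K / ξ sreset + (γ*D)^n * M := by
    intro n
    obtain ⟨h0, hg', hξ'⟩ := main n
    have h1 : ξ sreset * F n sI ≤ K := (hkeymeas (F n) h0).trans hξ'
    have h2 : F n sI ≤ K / ξ sreset := by
      rw [le_div_iff₀ hξreset]
      linarith
    linarith [hg' sI]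
  have hlim : g sI ≤ K / ξ sreset := by
    have hγD0 : (0:ℝ) ≤ γ * D := by positivity
    have ht : Filter.Tendsto (fun n : ℕ => K / ξ sreset + (γ*D)^n * M)
        Filter.atTop (nhds (K / ξ sreset + 0 * M)) :=
      Filter.Tendsto.add tendsto_const_nhds
        (Filter.Tendsto.mul_const M (tendsto_pow_atTop_nhds_zero_of_lt_one hγD0 hγD))
    have := ge_of_tendsto' ht hbound
    simpa using this
  -- conclude
  have hKle : K ≤ (LR / γ + KV * LP) / (1 / D - γ) := by
    have h2 : 1 / D - γ = (1 - γ * D) / D := by field_simp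
    rw [hK, h2, div_div_eq_mul_div]
    rw [div_le_div_iff_of_pos_right h1γD]
    have h6 : LR + γ * (KV * LP) ≤ LR / γ + KV * LP := by
      have h7 : LR ≤ LR / γ := by
        rw [le_div_iff₀ hγ0]
        nlinarith
      nlinarith [mul_nonneg hKV0 hLP0]
    nlinarith
  calc |V sI - Vbar (φ sI)| = g sI := rfl
    _ ≤ K / ξ sreset := hlim
    _ = 1 / ξ sreset * K := by ring
    _ ≤ 1 / ξ sreset * ((LR / γ + KV * LP) / (1 / D - γ)) :=
        mul_le_mul_of_nonneg_left hKle (by positivity)
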